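/- Suppose φ is feasible for (G, w), the weight of edge (u,v) is decreased to c yielding w', and every directed path from v to u has w_φ-length at least -(c + φ(v) - φ(u)). Then w' has no negative cycle. -/

import Mathlib

/-- Weight of a path given as a list of vertices: sum of weights of consecutive pairs. -/
def pathWeight {V : Type*} (w : V → V → ℝ) (l : List V) : ℝ :=
  ((l.zip l.tail).map fun p => w p.1 p.2).sum

/-- `l` is a directed path (walk) from `u` to `v` in the graph with edge relation `E`. -/
def IsUVPath {V : Type*} (E : V → V → Prop) (u v : V) (l : List V) : Prop :=
  l ≠ [] ∧ l.Chain' E ∧ l.head? = some u ∧ l.getLast? = some v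

/-- `l` is a directed cycle (closed walk): consecutive pairs are edges and it starts
and ends at the same vertex, traversing at least one edge. -/
def IsCycle {V : Type*} (E : V → V → Prop) (l : List V) : Prop :=
  2 ≤ l.length ∧ l.Chain' E ∧ l.head? = l.getLast?

/-- `w` is consistent with the graph `E`: no directed cycle has negative total weight. -/
def Consistent {V : Type*} (E : V → V → Prop) (w : V → V → ℝ) : Prop :=
  ∀ l, IsCycle E l → 0 ≤ pathWeight w l

section Aux

variable {V : Type*}

theorem pw_nil (w : V → V → ℝ) : pathWeight w ([] : List V) = 0 := by
  simp [pathWeight]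

theorem pw_single (w : V → V → ℝ) (a : V) : pathWeight w [a] = 0 := by
  simp [pathWeight]

theorem pw_cons (w : V → V → ℝ) (a b : V) (t : List V) :
    pathWeight w (a :: b :: t) = w a b + pathWeight w (b :: t) := by
  simp [pathWeight]

theorem pw_join (w : V → V → ℝ) :
    ∀ (l1 : List V) (x : V) (l2 : List V),
      pathWeight w (l1 ++ x :: l2) = pathWeight w (l1 ++ [x]) + pathWeight w (x :: l2)
  | [], x, l2 => by simp [pw_single]
  | [a], x, l2 => by simp [pw_cons, pw_single]
  | a :: b :: t, x, l2 => by
      have h := pw_join w (b :: t) x l2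
      simp only [List.cons_append] at *
      rw [pw_cons, pw_cons, h]
      ring

theorem pw_congr {w1 w2 : V → V → ℝ} :
    ∀ {l : List V}, l.Chain' (fun a b => w1 a b = w2 a b) →
      pathWeight w1 l = pathWeight w2 l
  | [], _ => by simp [pw_nil]
  | [a], _ => by simp [pw_single]
  | a :: b :: t, h => by
      rw [pw_cons, pw_cons, (List.isChain_cons_cons.mp h).1,
        pw_congr (List.isChain_cons_cons.mp h).2]

theorem pw_nonneg {w : V → V → ℝ} :
    ∀ {l : List V}, l.Chain' (fun a b => 0 ≤ w a b) → 0 ≤ pathWeight w l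
  | [], _ => by simp [pw_nil]
  | [a], _ => by simp [pw_single]
  | a :: b :: t, h => by
      rw [pw_cons]
      have h' := List.isChain_cons_cons.mp h
      have := pw_nonneg h'.2
      linarith [h'.1]

theorem pw_telescope (w : V → V → ℝ) (φ : V → ℝ) :
    ∀ (l : List V) (a b : V), l.head? = some a → l.getLast? = some b →
      pathWeight (fun x y => w x y + φ y - φ x) l = pathWeight w l + φ b - φ a
  | [], a, b, ha, _ => by simp at ha
  | [x], a, b, ha, hb => by
      simp at ha hb
      subst ha; subst hb
      simp [pw_single]
  | x :: y :: t, a, b, ha, hb => by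
      simp at ha
      subst ha
      rw [List.getLast?_cons_cons] at hb
      rw [pw_cons, pw_cons, pw_telescope w φ (y :: t) y b rfl hb]
      ring

theorem pw_glue (w : V → V → ℝ) {s t : List V} {x : V}
    (hs : s.getLast? = some x) (ht : t.head? = some x) :
    pathWeight w (s ++ t.tail) = pathWeight w s + pathWeight w t := by
  rcases t with _ | ⟨y, ts⟩
  · simp at ht
  · have hyx : y = x := by simpa using ht
    subst hyx
    have hsne : s ≠ [] := by rintro rfl; simp at hs
    have hsd : s.dropLast ++ [y] = s := by
      have hg := List.getLast?_eq_getLast (l := s) hsne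
      rw [hg] at hs
      simp only [Option.some_inj] at hs
      rw [← hs]
      exact List.dropLast_append_getLast hsne
    rw [← hsd]
    simp only [List.tail_cons, List.append_assoc, List.singleton_append]
    rw [pw_join w s.dropLast y ts]

theorem chain_glue {R : V → V → Prop} {s t : List V} {x : V}
    (hs : s.getLast? = some x) (ht : t.head? = some x)
    (cs : s.Chain' R) (ct : t.Chain' R) : (s ++ t.tail).Chain' R := by
  rcases t with _ | ⟨y, ts⟩
  · simp at ht
  · have hyx : y = x := by simpa using ht
    subst hyx
    have h := List.isChain_cons.mp ct
    exact List.IsChain.append cs h.2 (by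
      intro a ha b hb
      rw [hs] at ha
      simp at ha
      subst ha
      exact h.1 b hb)

theorem getLast_glue {s t : List V} {x : V}
    (hs : s.getLast? = some x) (ht : t.head? = some x) :
    (s ++ t.tail).getLast? = t.getLast? := by
  rcases t with _ | ⟨y, ts⟩
  · simp at ht
  · have hyx : y = x := by simpa using ht
    subst hyx
    rcases ts with _ | ⟨z, ts'⟩
    · simpa using hs
    · simp only [List.tail_cons, List.getLast?_cons_cons]
      exact List.getLast?_append_of_ne_nil s (by simp)

theorem split_uv [DecidableEq V] (u v : V) :
    ∀ l : List V, l.Chain' (fun a b => ¬(a = u ∧ b = v)) ∨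
      ∃ l1 l2, l = l1 ++ u :: v :: l2 ∧ (l1 ++ [u]).Chain' (fun a b => ¬(a = u ∧ b = v))
  | [] => Or.inl List.isChain_nil
  | [a] => Or.inl (List.isChain_singleton a)
  | a :: b :: t => by
      by_cases h : a = u ∧ b = v
      · exact Or.inr ⟨[], t, by simp [h.1, h.2], List.isChain_singleton u⟩
      · rcases split_uv u v (b :: t) with hc | ⟨l1, l2, heq, hch⟩
        · exact Or.inl (List.isChain_cons_cons.mpr ⟨h, hc⟩)
        · refine Or.inr ⟨a :: l1, l2, by simp [heq], ?_⟩
          rw [List.cons_append]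
          refine List.isChain_cons.mpr ⟨?_, hch⟩
          intro y hy
          have hb : (l1 ++ [u]).head? = some b := by
            rcases l1 with _ | ⟨cx, l1'⟩ <;>
            · simp only [List.nil_append, List.cons_append, List.cons.injEq] at heq
              simp [heq.1]
          rw [hb] at hy
          simp only [Option.mem_def, Option.some_inj] at hy
          subst hy
          exact h
  termination_by l => l.length

end Aux

/-- If every `v`-to-`u` path has `w_φ`-length at least `-(c + φ(v) - φ(u))`, then
decreasing the weight of edge `(u,v)` to `c` creates no negative cycle. -/
theorem stmt18 {V : Type*} [DecidableEq V] (E : V → V → Prop) (w : V → V → ℝ) (φ : V → ℝ)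
    (hfeas : ∀ a b, E a b → 0 ≤ w a b + φ b - φ a)
    (u v : V) (he : E u v) (c : ℝ) (hc : c ≤ w u v)
    (w' : V → V → ℝ)
    (hw' : ∀ a b, w' a b = if a = u ∧ b = v then c else w a b)
    (hpaths : ∀ l, IsUVPath E v u l →
      -(c + φ v - φ u) ≤ pathWeight (fun a b => w a b + φ b - φ a) l) :
    Consistent E w' := by
  classical
  set δ : ℝ := c + φ v - φ u with hδ
  set W : V → V → ℝ := fun a b => w' a b + φ b - φ a with hWdef
  set Wφ : V → V → ℝ := fun a b => w a b + φ b - φ a with hWφdef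
  have hWuv : W u v = δ := by simp [hWdef, hw', hδ]
  have hWeq : ∀ a b, ¬(a = u ∧ b = v) → W a b = Wφ a b := by
    intro a b h
    simp [hWdef, hWφdef, hw', h]
  -- Lemma A: every v→u walk has W-weight at least -δ
  have A : ∀ n, ∀ l : List V, l.length ≤ n → l.Chain' E → l.head? = some v →
      l.getLast? = some u → -δ ≤ pathWeight W l := by
    intro n
    induction n with
    | zero =>
      intro l hl _ hh _
      rcases l with _ | _
      · simp at hh
      · simp at hl
    | succ n ih =>
      intro l hl hch hh hlast
      rcases split_uv u v l with hno | ⟨l1, l2, heq, hno⟩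
      · rw [pw_congr (hno.imp hWeq)]
        exact hpaths l ⟨by rintro rfl; simp at hh, hch, hh, hlast⟩
      · subst heq
        have hsplit : l1 ++ u :: v :: l2 = (l1 ++ [u]) ++ (v :: l2) := by simp
        rw [hsplit] at hch
        obtain ⟨c1, c2, -⟩ := List.isChain_append.mp hch
        have hh1 : (l1 ++ [u]).head? = some v := by
          rcases l1 with _ | ⟨a, t⟩ <;> simp_all
        have b1 : -δ ≤ pathWeight W (l1 ++ [u]) := by
          rw [pw_congr (hno.imp hWeq)]
          exact hpaths _ ⟨by simp, c1, hh1, by simp⟩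
        have hlast2 : (v :: l2).getLast? = some u := by
          rw [← hlast, List.getLast?_append_cons, List.getLast?_cons_cons]
        have b2 : -δ ≤ pathWeight W (v :: l2) := by
          apply ih (v :: l2) ?_ c2 rfl hlast2
          simp only [List.length_append, List.length_cons] at hl ⊢
          omega
        rw [pw_join W l1 u (v :: l2), pw_cons, hWuv]
        linarith
  intro l hcyc
  obtain ⟨hlen, hch, hhl⟩ := hcyc
  obtain ⟨a, ha⟩ : ∃ a, l.head? = some a := by
    rcases l with _ | _
    · simp at hlen
    · exact ⟨_, rfl⟩
  have hla : l.getLast? = some a := by rw [← hhl, ha]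
  have key : 0 ≤ pathWeight W l := by
    rcases split_uv u v l with hno | ⟨l1, l2, heq, hno⟩
    · rw [pw_congr (hno.imp hWeq)]
      exact pw_nonneg (hch.imp (by intro x y h; exact hfeas x y h))
    · subst heq
      have hsplit : l1 ++ u :: v :: l2 = (l1 ++ [u]) ++ (v :: l2) := by simp
      rw [hsplit] at hch
      obtain ⟨c1, c2, -⟩ := List.isChain_append.mp hch
      have hh1 : (l1 ++ [u]).head? = some a := by
        rcases l1 with _ | ⟨b, t⟩ <;> simp_all
      have hlast2 : (v :: l2).getLast? = some a := by
        rw [← hla, List.getLast?_append_cons, List.getLast?_cons_cons]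
      have cq : ((v :: l2) ++ (l1 ++ [u]).tail).Chain' E := chain_glue hlast2 hh1 c2 c1
      have hq_last : ((v :: l2) ++ (l1 ++ [u]).tail).getLast? = some u := by
        rw [getLast_glue hlast2 hh1]
        simp
      have hq_head : ((v :: l2) ++ (l1 ++ [u]).tail).head? = some v := rfl
      have bq := A _ ((v :: l2) ++ (l1 ++ [u]).tail) le_rfl cq hq_head hq_last
      rw [pw_glue W hlast2 hh1] at bq
      rw [pw_join W l1 u (v :: l2), pw_cons, hWuv]
      linarith
  have htel := pw_telescope w' φ l a a ha hla
  have : pathWeight W l = pathWeight w' l := by rw [hWdef, htel]; ring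
  linarith [key, this ▸ key]
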